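/- For a unit vector Ψ ∈ Λ^N(ℂ^d) with natural occupation numbers n (eigenvalues of its one-particle reduced density matrix), and any Slater determinant e_{i₁}∧⋯∧e_{i_N} built from the natural orbitals with index set I = {i₁,…,i_N}, the overlap satisfies δ_I(n)/(2 min(N, d-N)) ≤ 1 - |⟨e_{i₁}∧⋯∧e_{i_N}, Ψ⟩|² ≤ δ_I(n)/2, where δ_I(n) = Σ_{i∈I}(1-nᵢ) + Σ_{i∉I} nᵢ. -/

import Mathlib

/-- Sign picked up by a fermionic ladder operator acting on the Slater
determinant labelled by the occupied set `s` at orbital `i`. -/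
def fermiSign {d : ℕ} (s : Finset (Fin d)) (i : Fin d) : ℂ :=
  (-1 : ℂ) ^ (s.filter (fun k => k < i)).card

/-- One-particle reduced density matrix `ρ i j = ⟨Ψ| a†_j a_i |Ψ⟩` of a state
`Ψ` given by its coefficients in the Slater-determinant basis of `Λ^N(ℂ^d)`. -/
noncomputable def oneRDM (d : ℕ) (Ψ : Finset (Fin d) → ℂ) :
    Matrix (Fin d) (Fin d) ℂ := fun i j =>
  ∑ s : Finset (Fin d),
    if i ∈ s ∧ j ∉ s.erase i then
      (starRingEnd ℂ) (Ψ (insert j (s.erase i))) * Ψ s *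
        fermiSign s i * fermiSign (s.erase i) j
    else 0

/-- Bound of Schilling et al. (Ref. [CS2013]): for a unit vector
`Ψ ∈ Λ^N(ℂ^d)` expanded in its own natural-orbital basis (so that its
one-particle reduced density matrix is diagonal with natural occupation
numbers `n i`), and any natural-orbital Slater determinant with occupied set
`I` of size `N`, the squared overlap `|⟨e_I, Ψ⟩|² = |Ψ I|²` satisfies
`δ_I(n)/(2 min(N, d-N)) ≤ 1 - |Ψ I|² ≤ δ_I(n)/2`, where
`δ_I(n) = ∑_{i∈I}(1-nᵢ) + ∑_{i∉I} nᵢ`. -/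
theorem overlap_l1_bounds (N d : ℕ) (hN : 0 < N) (hNd : N < d)
    (Ψ : Finset (Fin d) → ℂ)
    (hsupp : ∀ s : Finset (Fin d), Ψ s ≠ 0 → s.card = N)
    (hnorm : ∑ s : Finset (Fin d), ‖Ψ s‖ ^ 2 = 1)
    (n : Fin d → ℝ)
    (hdiag : oneRDM d Ψ = Matrix.diagonal (fun i => ((n i : ℝ) : ℂ)))
    (I : Finset (Fin d)) (hI : I.card = N) :
    (∑ i ∈ I, (1 - n i) + ∑ i ∈ Iᶜ, n i) / (2 * min N (d - N)) ≤
        1 - ‖Ψ I‖ ^ 2 ∧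
      1 - ‖Ψ I‖ ^ 2 ≤
        (∑ i ∈ I, (1 - n i) + ∑ i ∈ Iᶜ, n i) / 2 := by
  classical
  set p : Finset (Fin d) → ℝ := fun s => ‖Ψ s‖ ^ 2 with hp
  have hp0 : ∀ s, 0 ≤ p s := fun s => sq_nonneg _
  have hnorm' : ∑ s : Finset (Fin d), p s = 1 := hnorm
  have hcardN : ∀ s : Finset (Fin d), p s ≠ 0 → s.card = N := by
    intro s hs
    refine hsupp s fun h => hs ?_
    simp [hp, h]
  -- occupation numbers as marginal probabilities
  have hn : ∀ i : Fin d, n i = ∑ s : Finset (Fin d), if i ∈ s then p s else 0 := by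
    intro i
    have h1 : oneRDM d Ψ i i = ((n i : ℝ) : ℂ) := by
      rw [hdiag]; simp [Matrix.diagonal]
    have h2 : oneRDM d Ψ i i =
        ((∑ s : Finset (Fin d), if i ∈ s then p s else 0 : ℝ) : ℂ) := by
      rw [oneRDM]
      push_cast
      apply Finset.sum_congr rfl
      intro s _
      by_cases hi : i ∈ s
      · have hni : i ∉ s.erase i := Finset.notMem_erase i s
        rw [if_pos ⟨hi, hni⟩, if_pos hi, Finset.insert_erase hi]
        have hsign : fermiSign (s.erase i) i = fermiSign s i := by
          unfold fermiSign
          congr 2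
          ext x
          simp only [Finset.mem_filter, Finset.mem_erase]
          exact ⟨fun h => ⟨h.1.2, h.2⟩, fun h => ⟨⟨h.2.ne, h.1⟩, h.2⟩⟩
        have hsq : fermiSign s i * fermiSign s i = 1 := by
          unfold fermiSign
          rw [← pow_add, ← two_mul, pow_mul]
          norm_num
        have hconj : (starRingEnd ℂ) (Ψ s) * Ψ s = ((‖Ψ s‖ ^ 2 : ℝ) : ℂ) := by
          rw [mul_comm, Complex.mul_conj, Complex.normSq_eq_norm_sq]
        rw [hsign]
        calc (starRingEnd ℂ) (Ψ s) * Ψ s * fermiSign s i * fermiSign s i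
            = (starRingEnd ℂ) (Ψ s) * Ψ s * (fermiSign s i * fermiSign s i) := by ring
          _ = ((‖Ψ s‖ ^ 2 : ℝ) : ℂ) := by rw [hsq, hconj, mul_one]
      · rw [if_neg (fun h => hi h.1), if_neg hi]; simp
    have h3 := h1.symm.trans h2
    exact_mod_cast h3
  -- the deficiency k s
  set k : Finset (Fin d) → ℕ := fun s => N - (I ∩ s).card with hk
  have hcardle : ∀ s : Finset (Fin d), p s ≠ 0 → (I ∩ s).card ≤ N := by
    intro s hs
    calc (I ∩ s).card ≤ s.card := Finset.card_le_card Finset.inter_subset_right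
      _ = N := hcardN s hs
  have hsdiff : ∀ s : Finset (Fin d), p s ≠ 0 → (s \ I).card = k s := by
    intro s hs
    have h1 : (s \ I).card + (s ∩ I).card = s.card := Finset.card_sdiff_add_card_inter s I
    have h2 : s ∩ I = I ∩ s := Finset.inter_comm s I
    have h3 := hcardN s hs
    rw [h2] at h1
    have h4 := hcardle s hs
    simp only [hk]
    omega
  -- δ identity
  have hdelta : ∑ i ∈ I, (1 - n i) + ∑ i ∈ Iᶜ, n i
      = 2 * ∑ s : Finset (Fin d), p s * (k s : ℝ) := by
    have hIn : ∑ i ∈ I, n i = ∑ s : Finset (Fin d), ((I ∩ s).card : ℝ) * p s := by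
      calc ∑ i ∈ I, n i = ∑ i ∈ I, ∑ s : Finset (Fin d), (if i ∈ s then p s else 0) :=
            Finset.sum_congr rfl fun i _ => hn i
        _ = ∑ s : Finset (Fin d), ∑ i ∈ I, (if i ∈ s then p s else 0) := Finset.sum_comm
        _ = ∑ s : Finset (Fin d), ((I ∩ s).card : ℝ) * p s := by
            refine Finset.sum_congr rfl fun s _ => ?_
            rw [Finset.sum_ite_mem, Finset.sum_const, nsmul_eq_mul]
    have hIcn : ∑ i ∈ Iᶜ, n i = ∑ s : Finset (Fin d), ((s \ I).card : ℝ) * p s := by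
      calc ∑ i ∈ Iᶜ, n i = ∑ i ∈ Iᶜ, ∑ s : Finset (Fin d), (if i ∈ s then p s else 0) :=
            Finset.sum_congr rfl fun i _ => hn i
        _ = ∑ s : Finset (Fin d), ∑ i ∈ Iᶜ, (if i ∈ s then p s else 0) := Finset.sum_comm
        _ = ∑ s : Finset (Fin d), ((s \ I).card : ℝ) * p s := by
            refine Finset.sum_congr rfl fun s _ => ?_
            rw [Finset.sum_ite_mem, Finset.sum_const, nsmul_eq_mul]
            have hcs : Iᶜ ∩ s = s \ I := by
              ext x
              simp [Finset.mem_sdiff, and_comm]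
            rw [hcs]
    have hI1 : ∑ i ∈ I, (1 - n i) = (N : ℝ) - ∑ i ∈ I, n i := by
      rw [Finset.sum_sub_distrib, Finset.sum_const, hI, nsmul_eq_mul, mul_one]
    have hNsum : (N : ℝ) = ∑ s : Finset (Fin d), p s * N := by
      rw [← Finset.sum_mul, hnorm', one_mul]
    rw [hI1, hIn, hIcn, hNsum, ← Finset.sum_sub_distrib, ← Finset.sum_add_distrib,
      Finset.mul_sum]
    refine Finset.sum_congr rfl fun s _ => ?_
    by_cases hs : p s = 0
    · rw [hs]; ring
    · have h1 : (s \ I).card = k s := hsdiff s hs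
      have h2 : ((k s : ℕ) : ℝ) = (N : ℝ) - ((I ∩ s).card : ℝ) := by
        have := hcardle s hs
        simp only [hk]
        push_cast [Nat.cast_sub this]
        ring
      rw [h1, h2]
      ring
  -- bounds on k
  set m : ℕ := min N (d - N) with hm
  have hm0 : 0 < m := lt_min hN (by omega)
  have hkm : ∀ s : Finset (Fin d), p s ≠ 0 → k s ≤ m := by
    intro s hs
    refine le_min (Nat.sub_le _ _) ?_
    rw [← hsdiff s hs]
    have h1 : s \ I ⊆ Iᶜ := by
      intro x hx
      rw [Finset.mem_compl]
      exact (Finset.mem_sdiff.mp hx).2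
    have h2 := Finset.card_le_card h1
    have hIc : Iᶜ.card = d - N := by
      rw [Finset.card_compl, hI, Fintype.card_fin]
    omega
  have hk1 : ∀ s : Finset (Fin d), s ≠ I → p s ≠ 0 → 1 ≤ k s := by
    intro s hsI hs
    by_contra h
    have hc : (I ∩ s).card = N := by
      have := hcardle s hs
      simp only [hk] at h
      omega
    have hIsub : I ∩ s = I :=
      Finset.eq_of_subset_of_card_le Finset.inter_subset_left (by rw [hI, hc])
    have hIs : I ⊆ s := by rw [← hIsub]; exact Finset.inter_subset_right
    exact hsI ((Finset.eq_of_subset_of_card_le hIs (by rw [hcardN s hs, hI])).symm)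
  -- comparisons
  have hRI : ∑ s : Finset (Fin d), (if s = I then 0 else p s) = 1 - p I := by
    have h1 : ∑ s : Finset (Fin d), (if s = I then p s else 0) = p I := by
      rw [Finset.sum_ite_eq' Finset.univ I p]
      simp
    have h2 : ∀ s : Finset (Fin d), (if s = I then (0 : ℝ) else p s)
        = p s - (if s = I then p s else 0) := by
      intro s; split_ifs <;> ring
    rw [Finset.sum_congr rfl (fun s _ => h2 s), Finset.sum_sub_distrib, h1, hnorm']
  have hkI : k I = 0 := by
    simp only [hk, Finset.inter_self, hI, Nat.sub_self]
  have hlow : 1 - p I ≤ ∑ s : Finset (Fin d), p s * (k s : ℝ) := by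
    rw [← hRI]
    apply Finset.sum_le_sum
    intro s _
    by_cases hsI : s = I
    · rw [if_pos hsI]
      positivity
    · rw [if_neg hsI]
      by_cases hs : p s = 0
      · rw [hs]; simp
      · have h1 : (1 : ℝ) ≤ (k s : ℝ) := by exact_mod_cast hk1 s hsI hs
        calc p s = p s * 1 := (mul_one _).symm
          _ ≤ p s * (k s : ℝ) := by
              exact mul_le_mul_of_nonneg_left h1 (hp0 s)
  have hup : ∑ s : Finset (Fin d), p s * (k s : ℝ) ≤ (m : ℝ) * (1 - p I) := by
    rw [← hRI, Finset.mul_sum]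
    apply Finset.sum_le_sum
    intro s _
    by_cases hsI : s = I
    · subst hsI
      rw [if_pos rfl, hkI]
      simp
    · rw [if_neg hsI]
      by_cases hs : p s = 0
      · rw [hs]; simp
      · have h1 : (k s : ℝ) ≤ (m : ℝ) := by exact_mod_cast hkm s hs
        calc p s * (k s : ℝ) ≤ p s * (m : ℝ) := mul_le_mul_of_nonneg_left h1 (hp0 s)
          _ = (m : ℝ) * p s := mul_comm _ _
  have hmR : (0 : ℝ) < (m : ℝ) := by exact_mod_cast hm0
  have hgoalp : ‖Ψ I‖ ^ 2 = p I := rfl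
  constructor
  · rw [hgoalp, hdelta]
    rw [div_le_iff₀ (by positivity)]
    calc 2 * ∑ s : Finset (Fin d), p s * (k s : ℝ) ≤ 2 * ((m : ℝ) * (1 - p I)) := by
          linarith
      _ = (1 - p I) * (2 * (m : ℝ)) := by ring
  · rw [hgoalp, hdelta]
    rw [le_div_iff₀ (by norm_num : (0:ℝ) < 2)]
    linarith
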